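/- For every integer i, define nⁱ = (1, i, i² − i + 1) ∈ ℤ³. Then: (1) det[nⁱ n^{i+1} n^{i+2}] = 2 for every i; and (2) the third component of the cross product nⁱ × n^j equals j − i, so (nⁱ × n^j)(3) > 0 whenever i < j. -/
import Mathlib


/-- Determinant of the 3×3 integer matrix with columns `a`, `b`, `c`. -/
def det3 (a b c : Fin 3 → ℤ) : ℤ := Matrix.det (Matrix.transpose (Matrix.of ![a, b, c]))

/-- Third component of the cross product of two vectors in `ℤ³`. -/
def cross3 (v w : Fin 3 → ℤ) : ℤ := v 0 * w 1 - v 1 * w 0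

/-- The vector `nⁱ = (1, i, i² − i + 1)`. -/
def nvec (i : ℤ) : Fin 3 → ℤ := ![1, i, i ^ 2 - i + 1]

theorem explicit_good_cone_normals :
    (∀ i : ℤ, det3 (nvec i) (nvec (i + 1)) (nvec (i + 2)) = 2) ∧
    (∀ i j : ℤ, cross3 (nvec i) (nvec j) = j - i) ∧
    (∀ i j : ℤ, i < j → 0 < cross3 (nvec i) (nvec j)) := by
  have hc : ∀ i j : ℤ, cross3 (nvec i) (nvec j) = j - i := by
    intro i j
    simp [cross3, nvec]
  refine ⟨?_, hc, ?_⟩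
  · intro i
    rw [det3, Matrix.det_transpose, Matrix.det_fin_three]
    simp [nvec, Matrix.vecHead, Matrix.vecTail]
    ring
  · intro i j h
    rw [hc]
    omega
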